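/- Let X be a finite-dimensional real normed space whose dual unit ball has finitely many extreme points (a polyhedral norm). For every x ∈ X there exists ε > 0 such that for all y with ‖y‖ ≤ ε, the duality set J(x+y) is contained in J(x), where J(z) = {φ in the dual unit ball : φ(z) = ‖z‖}. -/

import Mathlib

/-- The duality map: `J z` is the set of dual-unit-ball functionals attaining the norm at `z`. -/
def dualityMap {X : Type*} [NormedAddCommGroup X] [NormedSpace ℝ X] (z : X) :
    Set (X →L[ℝ] ℝ) := {φ | ‖φ‖ ≤ 1 ∧ φ z = ‖z‖}

theorem stmt_4 {X : Type*} [NormedAddCommGroup X] [NormedSpace ℝ X]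
    [FiniteDimensional ℝ X]
    (hpoly : (Set.extremePoints ℝ {φ : X →L[ℝ] ℝ | ‖φ‖ ≤ 1}).Finite) :
    ∀ x : X, ∃ ε > 0, ∀ y : X, ‖y‖ ≤ ε → dualityMap (x + y) ⊆ dualityMap x := by
  intro x
  set B : Set (X →L[ℝ] ℝ) := {φ : X →L[ℝ] ℝ | ‖φ‖ ≤ 1} with hB
  have hBball : B = Metric.closedBall 0 1 := by
    ext φ; simp [hB, Metric.mem_closedBall, dist_zero_right]
  have hBcomp : IsCompact B := by
    rw [hBball]; exact isCompact_closedBall 0 1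
  have hBconv : Convex ℝ B := by rw [hBball]; exact convex_closedBall 0 1
  have hKM : closure (convexHull ℝ (B.extremePoints ℝ)) = B :=
    closure_convexHull_extremePoints hBcomp hBconv
  have hclosed : IsClosed (convexHull ℝ (B.extremePoints ℝ)) :=
    (hpoly.isCompact_convexHull ℝ).isClosed
  have hBeq : B = convexHull ℝ (B.extremePoints ℝ) := by
    conv_lhs => rw [← hKM]
    rw [hclosed.closure_eq]
  -- extreme points are in B, hence bounded by norm
  have hE_le : ∀ e ∈ B.extremePoints ℝ, ∀ z : X, e z ≤ ‖z‖ := by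
    intro e he z
    have h0 : e ∈ B := extremePoints_subset he
    have h1 : ‖e‖ ≤ 1 := h0
    calc e z ≤ ‖e z‖ := le_abs_self _
      _ ≤ ‖e‖ * ‖z‖ := e.le_opNorm z
      _ ≤ 1 * ‖z‖ := by exact mul_le_mul_of_nonneg_right h1 (norm_nonneg z)
      _ = ‖z‖ := one_mul _
  set F : Finset (X →L[ℝ] ℝ) := hpoly.toFinset with hF
  set T : Finset (X →L[ℝ] ℝ) := F.filter (fun e => e x < ‖x‖) with hT
  obtain ⟨δ, hδpos, hδ⟩ : ∃ δ > 0, ∀ e ∈ T, ‖x‖ - e x ≥ δ := by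
    rcases T.eq_empty_or_nonempty with h | h
    · exact ⟨1, one_pos, by simp [h]⟩
    · refine ⟨T.inf' h (fun e => ‖x‖ - e x), ?_, fun e he => Finset.inf'_le _ he⟩
      rw [gt_iff_lt, Finset.lt_inf'_iff]
      intro e he
      have := (Finset.mem_filter.1 he).2
      linarith
  refine ⟨δ/3, by linarith, fun y hy φ hφ => ?_⟩
  obtain ⟨hφ1, hφ2⟩ := hφ
  refine ⟨hφ1, ?_⟩
  -- write φ as a convex combination of extreme points
  have hφB : φ ∈ convexHull ℝ (B.extremePoints ℝ) := by rw [← hBeq]; exact hφ1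
  rw [hpoly.convexHull_eq] at hφB
  obtain ⟨w, hw0, hw1, hwφ⟩ := hφB
  have hcm : ∑ e ∈ F, w e • e = φ := by
    rw [← hwφ, Finset.centerMass_eq_of_sum_1 _ _ hw1]; rfl
  have happ : ∀ z : X, φ z = ∑ e ∈ F, w e * e z := by
    intro z
    rw [← hcm]
    simp [ContinuousLinearMap.sum_apply, ContinuousLinearMap.smul_apply, smul_eq_mul]
  have hmemF : ∀ e ∈ F, e ∈ B.extremePoints ℝ := fun e he => hpoly.mem_toFinset.1 he
  -- each term attains the norm at x+y when weight positive
  have hkey : ∀ e ∈ F, w e ≠ 0 → e (x + y) = ‖x + y‖ := by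
    have hsum0 : ∑ e ∈ F, w e * (‖x + y‖ - e (x + y)) = 0 := by
      have : ∑ e ∈ F, w e * (‖x + y‖ - e (x + y))
          = (∑ e ∈ F, w e) * ‖x + y‖ - ∑ e ∈ F, w e * e (x + y) := by
        rw [Finset.sum_mul, ← Finset.sum_sub_distrib]
        congr 1; ext e; ring
      rw [this, hw1, one_mul, ← happ, hφ2, sub_self]
    intro e he hwe
    have := (Finset.sum_eq_zero_iff_of_nonneg (fun e he => by
      have h1 := hw0 e (hpoly.mem_toFinset.1 he)
      have h2 : e (x + y) ≤ ‖x + y‖ := hE_le e (hmemF e he) (x + y)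
      exact mul_nonneg h1 (by linarith))).1 hsum0 e he
    have h1 := hw0 e (hmemF e he)
    have : ‖x + y‖ - e (x + y) = 0 := by
      rcases mul_eq_zero.1 this with h | h
      · exact absurd h hwe
      · exact h
    linarith
  -- hence those e satisfy e x = ‖x‖
  have hex : ∀ e ∈ F, w e ≠ 0 → e x = ‖x‖ := by
    intro e he hwe
    have h1 : e (x + y) = ‖x + y‖ := hkey e he hwe
    have h2 : e y ≤ ‖y‖ := hE_le e (hmemF e he) y
    have h3 : ‖x‖ ≤ ‖x + y‖ + ‖y‖ := by
      have := norm_sub_le (x + y) y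
      simpa using this
    have h4 : e x = e (x + y) - e y := by
      rw [map_add]; ring
    have h5 : e x ≥ ‖x‖ - 2 * (δ/3) := by
      rw [h4, h1]; linarith
    by_contra hne
    have h6 : e x < ‖x‖ := lt_of_le_of_ne (hE_le e (hmemF e he) x) hne
    have h7 : e ∈ T := Finset.mem_filter.2 ⟨he, h6⟩
    have := hδ e h7
    linarith
  calc φ x = ∑ e ∈ F, w e * e x := happ x
    _ = ∑ e ∈ F, w e * ‖x‖ := by
        apply Finset.sum_congr rfl
        intro e he
        by_cases hwe : w e = 0
        · simp [hwe]
        · rw [hex e he hwe]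
    _ = ‖x‖ := by rw [← Finset.sum_mul, hw1, one_mul]
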